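/- arXiv:1101.5274 — 3 statements merged into one kernel-verified Lean document; each statement's English description precedes it below -/
import Mathlib

section
/- Let X be a Hausdorff topological vector space, C ⊆ X a nonempty closed convex bounded set, and f : C → C continuous. Then there exists a nonempty separable closed convex set D ⊆ C with f(D) ⊆ D. -/
/-- The convex hull of a finite set contains a countable subset whose closure
contains the hull. -/
lemma aux_finset_hull (X : Type*) [AddCommGroup X] [Module ℝ X] [TopologicalSpace X]
    [IsTopologicalAddGroup X] [ContinuousSMul ℝ X] (F : Finset X) :
    ∃ e : Set X, e.Countable ∧ e ⊆ convexHull ℝ (F : Set X) ∧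
      convexHull ℝ (F : Set X) ⊆ closure e := by
  have hfin : (F : Set X).Finite := F.finite_toSet
  letI := hfin.fintype
  have himg := hfin.convexHull_eq_image (R := ℝ)
  set L : (↥(F : Set X) → ℝ) →ₗ[ℝ] X :=
    ∑ x : (F : Set X), (LinearMap.proj (R := ℝ) (φ := fun _ => ℝ) x).smulRight x.1 with hL
  have hLc : Continuous L := by
    have : ⇑L = fun w : ↥(F : Set X) → ℝ => ∑ x : (F : Set X), w x • (x : X) := by
      funext w
      simp [hL, LinearMap.sum_apply]
    rw [this]
    exact continuous_finset_sum _ fun x _ => (continuous_apply x).smul continuous_const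
  let g : stdSimplex ℝ (F : Set X) → X := fun p => L p.1
  have hgc : Continuous g := hLc.comp continuous_subtype_val
  obtain ⟨u, huc, hud⟩ := TopologicalSpace.exists_countable_dense (stdSimplex ℝ (F : Set X))
  refine ⟨g '' u, huc.image _, ?_, ?_⟩
  · rintro y ⟨p, _, rfl⟩
    rw [himg]
    exact ⟨p.1, p.2, rfl⟩
  · rw [himg]
    rintro y ⟨w, hw, rfl⟩
    have h1 : (⟨w, hw⟩ : stdSimplex ℝ (F : Set X)) ∈ closure u := hud _
    have h2 : g '' closure u ⊆ closure (g '' u) := image_closure_subset_closure_image hgc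
    exact h2 ⟨_, h1, rfl⟩

/-- The convex hull of a countable set contains a countable subset whose closure
contains the hull. -/
lemma aux_countable_hull (X : Type*) [AddCommGroup X] [Module ℝ X] [TopologicalSpace X]
    [IsTopologicalAddGroup X] [ContinuousSMul ℝ X] (d : Set X) (hd : d.Countable) :
    ∃ e : Set X, e.Countable ∧ e ⊆ convexHull ℝ d ∧ convexHull ℝ d ⊆ closure e := by
  choose e hec he1 he2 using fun F : Finset X => aux_finset_hull X F
  have hindex : {F : Finset X | (F : Set X) ⊆ d}.Countable := by
    have h := (Set.countable_setOf_finite_subset hd).preimage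
      (f := fun F : Finset X => (F : Set X)) (Finset.coe_injective)
    refine h.mono ?_
    intro F hF
    exact ⟨F.finite_toSet, hF⟩
  refine ⟨⋃ F ∈ {F : Finset X | (F : Set X) ⊆ d}, e F, ?_, ?_, ?_⟩
  · exact hindex.biUnion fun F _ => hec F
  · refine Set.iUnion₂_subset fun F hF => (he1 F).trans (convexHull_mono hF)
  · intro x hx
    rw [convexHull_eq_union_convexHull_finite_subsets] at hx
    simp only [Set.mem_iUnion] at hx
    obtain ⟨F, hF, hxF⟩ := hx
    have : closure (e F) ⊆ closure (⋃ F ∈ {F : Finset X | (F : Set X) ⊆ d}, e F) :=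
      closure_mono (Set.subset_biUnion_of_mem hF)
    exact this (he2 F hxF)

theorem stmt3 (X : Type*) [AddCommGroup X] [Module ℝ X] [TopologicalSpace X]
    [IsTopologicalAddGroup X] [ContinuousSMul ℝ X] [T2Space X]
    (C : Set X) (hC : C.Nonempty) (hCb : Bornology.IsVonNBounded ℝ C)
    (hCcl : IsClosed C) (hCconv : Convex ℝ C)
    (f : X → X) (hf : Set.MapsTo f C C) (hfc : ContinuousOn f C) :
    ∃ D : Set X, D ⊆ C ∧ D.Nonempty ∧ TopologicalSpace.IsSeparable D ∧
      IsClosed D ∧ Convex ℝ D ∧ Set.MapsTo f D D := by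
  classical
  obtain ⟨x₀, hx₀⟩ := hC
  -- a choice function giving countable "dense in hull" subsets
  let Q : Set X → Set X := fun d =>
    if h : d.Countable then (aux_countable_hull X d h).choose else ∅
  have hQc : ∀ d : Set X, d.Countable → (Q d).Countable := by
    intro d hd; simp only [Q, dif_pos hd]
    exact (aux_countable_hull X d hd).choose_spec.1
  have hQ1 : ∀ d : Set X, d.Countable → Q d ⊆ convexHull ℝ d := by
    intro d hd; simp only [Q, dif_pos hd]
    exact (aux_countable_hull X d hd).choose_spec.2.1
  have hQ2 : ∀ d : Set X, d.Countable → convexHull ℝ d ⊆ closure (Q d) := by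
    intro d hd; simp only [Q, dif_pos hd]
    exact (aux_countable_hull X d hd).choose_spec.2.2
  -- the iterated sets
  let c : ℕ → Set X := fun n =>
    Nat.rec {x₀} (fun _ s => (s ∪ f '' s) ∪ Q (s ∪ f '' s)) n
  have hcsucc : ∀ n, c (n + 1) = (c n ∪ f '' c n) ∪ Q (c n ∪ f '' c n) := fun n => rfl
  have hcc : ∀ n, (c n).Countable := by
    intro n
    induction n with
    | zero => exact Set.countable_singleton x₀
    | succ n ih =>
      rw [hcsucc]
      exact ((ih.union (ih.image f)).union (hQc _ (ih.union (ih.image f))))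
  have hcC : ∀ n, c n ⊆ C := by
    intro n
    induction n with
    | zero => exact Set.singleton_subset_iff.2 hx₀
    | succ n ih =>
      rw [hcsucc]
      have hu : c n ∪ f '' c n ⊆ C :=
        Set.union_subset ih ((Set.image_mono ih).trans (Set.image_subset_iff.2 hf))
      refine Set.union_subset hu ((hQ1 _ ((hcc n).union ((hcc n).image f))).trans ?_)
      exact convexHull_min hu hCconv
  have hmono : Monotone c := by
    refine monotone_nat_of_le_succ fun n => ?_
    rw [hcsucc]
    exact Set.subset_union_left.trans Set.subset_union_left
  set U : Set X := ⋃ n, c n with hU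
  have hUc : U.Countable := Set.countable_iUnion hcc
  have hUC : U ⊆ C := Set.iUnion_subset hcC
  -- the key: convex hull of U is contained in the closure of U
  have hkey : convexHull ℝ U ⊆ closure U := by
    intro x hx
    rw [convexHull_eq_union_convexHull_finite_subsets] at hx
    simp only [Set.mem_iUnion] at hx
    obtain ⟨F, hF, hxF⟩ := hx
    obtain ⟨n, hn⟩ := (hmono.directed_le.mono_comp _ fun _ _ h => h).exists_mem_subset_of_finset_subset_biUnion hF
    have h1 : x ∈ convexHull ℝ (c n ∪ f '' c n) :=
      convexHull_mono (hn.trans Set.subset_union_left) hxF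
    have h2 : x ∈ closure (Q (c n ∪ f '' c n)) :=
      hQ2 _ ((hcc n).union ((hcc n).image f)) h1
    refine closure_mono ?_ h2
    refine (Set.subset_union_right (s := c n ∪ f '' c n)).trans ?_
    rw [← hcsucc]
    exact Set.subset_iUnion c (n + 1)
  refine ⟨closure U, closure_minimal hUC hCcl, ⟨x₀, subset_closure (Set.mem_iUnion.2 ⟨0, rfl⟩)⟩,
    hUc.isSeparable.closure, isClosed_closure, ?_, ?_⟩
  · -- convexity: closure U = closure (convexHull ℝ U)
    have heq : closure U = closure (convexHull ℝ U) := by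
      refine le_antisymm (closure_mono (subset_convexHull ℝ U)) ?_
      exact closure_minimal hkey isClosed_closure
    rw [heq]
    exact (convex_convexHull ℝ U).closure
  · -- f maps closure U into itself
    have hfU : f '' U ⊆ U := by
      rintro y ⟨x, hx, rfl⟩
      obtain ⟨n, hn⟩ := Set.mem_iUnion.1 hx
      have : f x ∈ c (n + 1) := by
        rw [hcsucc]
        exact Or.inl (Or.inr ⟨x, hn, rfl⟩)
      exact Set.mem_iUnion.2 ⟨n + 1, this⟩
    have hcls : ContinuousOn f (closure U) := hfc.mono (closure_minimal hUC hCcl)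
    intro x hx
    have : f x ∈ closure (f '' U) := hcls.image_closure ⟨x, hx, rfl⟩
    exact (closure_mono hfU) this
end

section
/- Let X be a metrizable locally convex space. Then every bounded sequence in X has either a weakly Cauchy subsequence or a subsequence which is an ℓ1-sequence. -/
/-- Finitely supported elements of `ℓ¹`, with the `ℓ¹`-norm. -/
noncomputable def l10 : Submodule ℝ (lp (fun _ : ℕ => ℝ) 1) where
  carrier := {f | (Function.support (⇑f : ℕ → ℝ)).Finite}
  zero_mem' := by
    have : (Function.support (⇑(0 : lp (fun _ : ℕ => ℝ) 1) : ℕ → ℝ)) = ∅ := by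
      rw [lp.coeFn_zero]; exact Function.support_zero
    show (Function.support (⇑(0 : lp (fun _ : ℕ => ℝ) 1) : ℕ → ℝ)).Finite
    rw [this]; exact Set.finite_empty
  add_mem' := by
    intro a b ha hb
    refine Set.Finite.subset (ha.union hb) ?_
    intro n hn
    simp only [Set.mem_setOf_eq, Function.mem_support, lp.coeFn_add, Pi.add_apply] at hn
    by_contra h
    simp only [Set.mem_union, Function.mem_support, not_or, not_not] at h
    exact hn (by rw [h.1, h.2, add_zero])
  smul_mem' := by
    intro c a ha
    refine ha.subset ?_
    intro n hn
    simp only [Function.mem_support, lp.coeFn_smul, Pi.smul_apply, smul_eq_mul] at hn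
    exact Function.mem_support.2 fun h => hn (by rw [h, mul_zero])

/-- The canonical map `ℓ¹⁰ → X` determined by a sequence `x`. -/
noncomputable def T0 (X : Type*) [AddCommGroup X] [Module ℝ X] (x : ℕ → X) (a : l10) : X :=
  ∑ᶠ n, ((a : lp (fun _ : ℕ => ℝ) 1) : ℕ → ℝ) n • x n


namespace RosGalvin
open Set



variable (P : Finset ℕ → Prop)

/-- `E` is an initial segment of `L`. -/
def Init (E : Finset ℕ) (L : Set ℕ) : Prop :=
  ↑E ⊆ L ∧ ∀ a ∈ L, ∀ b ∈ E, a ≤ b → a ∈ E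

def acc (F : Finset ℕ) (M : Set ℕ) : Prop :=
  ∀ L ⊆ M, L.Infinite → ∃ E : Finset ℕ, Init E L ∧ P (F ∪ E)

def rej (F : Finset ℕ) (M : Set ℕ) : Prop :=
  ∀ N ⊆ M, N.Infinite → ¬ acc P F N

lemma acc_mono {F M N} (h : N ⊆ M) (ha : acc P F M) : acc P F N :=
  fun L hL => ha L (hL.trans h)

lemma rej_mono {F M N} (h : N ⊆ M) (hr : rej P F M) : rej P F N :=
  fun L hL => hr L (hL.trans h)

lemma exists_decide (F : Finset ℕ) (M : Set ℕ) (hM : M.Infinite) :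
    ∃ N ⊆ M, N.Infinite ∧ (acc P F N ∨ rej P F N) := by
  by_cases h : rej P F M
  · exact ⟨M, subset_rfl, hM, Or.inr h⟩
  · simp only [rej, not_forall] at h
    obtain ⟨N, hNM, hNi, hN⟩ := h
    exact ⟨N, hNM, hNi, Or.inl (not_not.mp hN)⟩

lemma decide_many (𝒮 : Finset (Finset ℕ)) (M : Set ℕ) (hM : M.Infinite) :
    ∃ N ⊆ M, N.Infinite ∧ ∀ F ∈ 𝒮, acc P F N ∨ rej P F N := by
  induction 𝒮 using Finset.induction_on with
  | empty => exact ⟨M, subset_rfl, hM, by simp⟩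
  | @insert F 𝒮 _ ih =>
    obtain ⟨N, hNM, hNi, hN⟩ := ih
    obtain ⟨N', hN'N, hN'i, hdec⟩ := exists_decide P F N hNi
    refine ⟨N', hN'N.trans hNM, hN'i, ?_⟩
    intro G hG
    rcases Finset.mem_insert.mp hG with rfl | hG
    · exact hdec
    · rcases hN G hG with h | h
      · exact Or.inl (acc_mono P hN'N h)
      · exact Or.inr (rej_mono P hN'N h)

lemma least_of_infinite {M : Set ℕ} (hM : M.Nonempty) :
    ∃ n ∈ M, ∀ m ∈ M, n ≤ m := by
  classical
  obtain ⟨m, hm⟩ := hM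
  have h : ∃ n, n ∈ M := ⟨m, hm⟩
  exact ⟨Nat.find h, Nat.find_spec h, fun k hk => Nat.find_le hk⟩

lemma P_of_acc_self {F : Finset ℕ} (hP : P F) (M : Set ℕ) : acc P F M := by
  intro L _ _
  refine ⟨∅, ⟨by simp, by simp⟩, by simpa using hP⟩

/-- Fusion state -/
structure St where
  D : Finset ℕ
  M : Set ℕ
  hM : M.Infinite
  hdec : ∀ F ∈ D.powerset, acc P F M ∨ rej P F M
  hlt : ∀ x ∈ D, ∀ y ∈ M, x < y

lemma step_ex (s : St P) :
    ∃ (n : ℕ) (N : Set ℕ), n ∈ s.M ∧ N ⊆ s.M ∧ N.Infinite ∧ (∀ y ∈ N, n < y) ∧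
      ∀ F ∈ (insert n s.D).powerset, acc P F N ∨ rej P F N := by
  obtain ⟨n, hn, hleast⟩ := least_of_infinite s.hM.nonempty
  have hMn : (s.M ∩ Set.Ioi n).Infinite := by
    have : s.M \ Set.Iic n ⊆ s.M ∩ Set.Ioi n := by
      intro y hy; exact ⟨hy.1, by simpa [Set.mem_Iic, not_le] using hy.2⟩
    exact ((s.hM.diff (Set.finite_Iic n)).mono this)
  obtain ⟨N, hNsub, hNi, hdec⟩ := decide_many P (insert n s.D).powerset _ hMn
  exact ⟨n, N, hn, fun y hy => (hNsub hy).1, hNi, fun y hy => (hNsub hy).2, hdec⟩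

noncomputable def step (s : St P) :
    {p : ℕ × St P // p.2.D = insert p.1 s.D ∧ p.1 ∈ s.M ∧ p.2.M ⊆ s.M ∧
      ∀ y ∈ p.2.M, p.1 < y} :=
  Classical.choice (by
    obtain ⟨n, N, hn, hNM, hNi, hgt, hdec⟩ := step_ex P s
    exact ⟨⟨⟨n, ⟨insert n s.D, N, hNi, hdec, by
      intro x hx y hy
      rcases Finset.mem_insert.mp hx with rfl | hx
      · exact hgt y hy
      · exact lt_trans (s.hlt x hx n hn) (hgt y hy)⟩⟩, rfl, hn, hNM, hgt⟩⟩)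

section Fusion

variable (s0 : St P)

/-- the fusion chain of states -/
noncomputable def states : ℕ → St P
  | 0 => s0
  | (i+1) => (step P (states i)).1.2

/-- the chosen elements -/
noncomputable def nn (i : ℕ) : ℕ := (step P (states P s0 i)).1.1

lemma states_succ_M_subset (i : ℕ) :
    (states P s0 (i+1)).M ⊆ (states P s0 i).M := (step P (states P s0 i)).2.2.2.1

lemma states_M_subset {i j : ℕ} (h : i ≤ j) :
    (states P s0 j).M ⊆ (states P s0 i).M := by
  induction j with
  | zero => simp_all
  | succ j ih =>
    rcases Nat.lt_or_ge i (j+1) with hl | hg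
    · exact (states_succ_M_subset P s0 j).trans (ih (Nat.lt_succ_iff.mp hl))
    · have : i = j + 1 := le_antisymm h hg
      subst this; exact subset_rfl

lemma nn_mem (i : ℕ) : nn P s0 i ∈ (states P s0 i).M := (step P (states P s0 i)).2.2.1

lemma nn_lt_states_succ (i : ℕ) : ∀ y ∈ (states P s0 (i+1)).M, nn P s0 i < y :=
  (step P (states P s0 i)).2.2.2.2

lemma states_succ_D (i : ℕ) :
    (states P s0 (i+1)).D = insert (nn P s0 i) (states P s0 i).D :=
  (step P (states P s0 i)).2.1

lemma nn_strictMono : StrictMono (nn P s0) := by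
  have h : ∀ i, nn P s0 i < nn P s0 (i+1) := by
    intro i
    exact nn_lt_states_succ P s0 i _ (nn_mem P s0 (i+1))
  exact strictMono_nat_of_lt_succ h

lemma nn_mem_D {u i : ℕ} (h : u < i) : nn P s0 u ∈ (states P s0 i).D := by
  induction i with
  | zero => omega
  | succ i ih =>
    rw [states_succ_D]
    rcases Nat.lt_or_ge u i with hl | hg
    · exact Finset.mem_insert_of_mem (ih hl)
    · have : u = i := by omega
      subst this; exact Finset.mem_insert_self _ _

lemma states_dec {F : Finset ℕ} {i : ℕ} (h : F ⊆ (states P s0 i).D) :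
    acc P F (states P s0 i).M ∨ rej P F (states P s0 i).M :=
  (states P s0 i).hdec F (Finset.mem_powerset.mpr h)

/-- the greedy step of phase 2 -/
lemma greedy_step (S : Finset ℕ) (i0 : ℕ)
    (hrej : ∀ F ⊆ S, ∃ j, rej P F ((states P s0 j).M))
    (hSD : ∀ v ∈ S, ∃ u ≤ i0, v = nn P s0 u) :
    ∃ i, i0 < i ∧ ∀ F ⊆ S, ∃ j, rej P (F ∪ {nn P s0 i}) ((states P s0 j).M) := by
  classical
  by_contra hc
  push_neg at hc
  -- for each i > i0 there is F ⊆ S with F ∪ {nn i} accepted at stage i+1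
  have hacc : ∀ i, i0 < i → ∃ F, F ⊆ S ∧
      acc P (F ∪ {nn P s0 i}) ((states P s0 (i+1)).M) := by
    intro i hi
    obtain ⟨F, hFS, hnr⟩ := hc i hi
    refine ⟨F, hFS, ?_⟩
    have hsub : F ∪ {nn P s0 i} ⊆ (states P s0 (i+1)).D := by
      intro v hv
      rcases Finset.mem_union.mp hv with hv | hv
      · obtain ⟨u, hu, rfl⟩ := hSD v (hFS hv)
        exact nn_mem_D P s0 (by omega)
      · rw [Finset.mem_singleton.mp hv]
        exact nn_mem_D P s0 (by omega)
    rcases states_dec P s0 hsub with h | h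
    · exact h
    · exact absurd h (hnr (i+1))
  -- pigeonhole: one F works for infinitely many i
  have : ∃ (F0 : Finset ℕ), F0 ⊆ S ∧
      {i | i0 < i ∧ acc P (F0 ∪ {nn P s0 i}) ((states P s0 (i+1)).M)}.Infinite := by
    choose f hf1 hf2 using hacc
    have hinf : Infinite {i // i0 < i} :=
      Set.infinite_coe_iff.mpr (Set.Ioi_infinite i0)
    have : ∃ (F0 : ↥S.powerset), {i : {i // i0 < i} |
        (⟨f i.1 i.2, Finset.mem_powerset.mpr (hf1 i.1 i.2)⟩ : ↥S.powerset) = F0}.Infinite := by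
      set g : {i // i0 < i} → ↥S.powerset :=
        fun i => ⟨f i.1 i.2, Finset.mem_powerset.mpr (hf1 i.1 i.2)⟩ with hg
      obtain ⟨y, hy⟩ := Finite.exists_infinite_fiber g
      refine ⟨y, ?_⟩
      rw [Set.infinite_coe_iff] at hy
      convert hy using 1
      rfl
    obtain ⟨F0, hF0⟩ := this
    refine ⟨F0.1, Finset.mem_powerset.mp F0.2, ?_⟩
    have him : (fun (i : {i // i0 < i}) => i.1) ''
        {i : {i // i0 < i} | (⟨f i.1 i.2, Finset.mem_powerset.mpr (hf1 i.1 i.2)⟩ :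
          ↥S.powerset) = F0} ⊆
        {i | i0 < i ∧ acc P (F0 ∪ {nn P s0 i}) ((states P s0 (i+1)).M)} := by
      rintro _ ⟨i, hi, rfl⟩
      refine ⟨i.2, ?_⟩
      have := hf2 i.1 i.2
      have heq : f i.1 i.2 = F0.1 := congrArg Subtype.val hi
      rwa [heq] at this
    exact ((hF0.image (Set.injOn_of_injective Subtype.val_injective)).mono him)
  obtain ⟨F0, hF0S, hI⟩ := this
  obtain ⟨j0, hj0⟩ := hrej F0 hF0S
  set I := {i | i0 < i ∧ acc P (F0 ∪ {nn P s0 i}) ((states P s0 (i+1)).M)} with hIdef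
  set C := nn P s0 '' (I ∩ Set.Ici j0) with hC
  have hCM : C ⊆ (states P s0 j0).M := by
    rintro _ ⟨i, ⟨_, hi2⟩, rfl⟩
    exact states_M_subset P s0 hi2 (nn_mem P s0 i)
  have hCinf : C.Infinite := by
    refine Set.Infinite.image ?_ ((hI.diff (Set.finite_Iio j0)).mono ?_)
    · exact Set.injOn_of_injective (nn_strictMono P s0).injective
    · intro i hi; exact ⟨hi.1, by simpa [Set.mem_Iio, not_lt] using hi.2⟩
  refine hj0 C hCM hCinf ?_
  -- show C accepts F0
  intro L hLC hLinf
  obtain ⟨m, hmL, hleast⟩ := least_of_infinite hLinf.nonempty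
  obtain ⟨i, hiI, rfl⟩ := hLC hmL
  set L' := L \ {nn P s0 i} with hL'
  have hL'inf : L'.Infinite := hLinf.diff (Set.finite_singleton _)
  have hL'sub : L' ⊆ (states P s0 (i+1)).M := by
    rintro y ⟨hyL, hym⟩
    obtain ⟨i', hi'I, rfl⟩ := hLC hyL
    have h1 : nn P s0 i < nn P s0 i' := by
      rcases lt_or_eq_of_le (hleast _ hyL) with h | h
      · exact h
      · exact absurd h.symm (by simpa using hym)
    have : i < i' := (nn_strictMono P s0).lt_iff_lt.mp h1
    exact states_M_subset P s0 this (nn_mem P s0 i')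
  obtain ⟨E, hEinit, hEP⟩ := hiI.1.2 L' hL'sub hL'inf
  refine ⟨insert (nn P s0 i) E, ⟨?_, ?_⟩, ?_⟩
  · intro v hv
    rcases Finset.mem_insert.mp (by exact_mod_cast hv) with rfl | hv
    · exact hmL
    · exact (hEinit.1 hv).1
  · intro a haL b hbE hab
    rcases Finset.mem_insert.mp hbE with rfl | hbE
    · have : nn P s0 i ≤ a := hleast a haL
      have : a = nn P s0 i := le_antisymm hab this
      simp [this]
    · by_cases ham : a = nn P s0 i
      · simp [ham]
      · exact Finset.mem_insert_of_mem
          (hEinit.2 a ⟨haL, by simpa using ham⟩ b hbE hab)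
  · have : F0 ∪ insert (nn P s0 i) E = F0 ∪ {nn P s0 i} ∪ E := by
      ext v; simp [Finset.mem_union, Finset.mem_insert]
    rwa [this]

/-- phase-2 state -/
def GState : Type :=
  {p : ℕ × Finset ℕ // (∀ F ⊆ p.2, ∃ j, rej P F ((states P s0 j).M)) ∧
      (∀ v ∈ p.2, ∃ u ≤ p.1, v = nn P s0 u)}

noncomputable def greedyStep (q : GState P s0) :
    {q' : GState P s0 // q.1.1 < q'.1.1 ∧
      q'.1.2 = insert (nn P s0 q'.1.1) q.1.2} :=
  Classical.choice (by
    classical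
    obtain ⟨⟨i0, S⟩, hrej, hSD⟩ := q
    obtain ⟨i, hii, hir⟩ := greedy_step P s0 S i0 hrej hSD
    refine ⟨⟨⟨(i, insert (nn P s0 i) S), ?_, ?_⟩, hii, rfl⟩⟩
    · intro F hF
      by_cases hm : nn P s0 i ∈ F
      · have hFe : F.erase (nn P s0 i) ⊆ S := by
          intro v hv
          have := hF (Finset.mem_of_mem_erase hv)
          rcases Finset.mem_insert.mp this with h | h
          · exact absurd h (Finset.ne_of_mem_erase hv)
          · exact h
        obtain ⟨j, hj⟩ := hir (F.erase (nn P s0 i)) hFe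
        refine ⟨j, ?_⟩
        have : F = F.erase (nn P s0 i) ∪ {nn P s0 i} := by
          ext v
          simp only [Finset.mem_union, Finset.mem_erase, Finset.mem_singleton]
          constructor
          · intro hv; by_cases h : v = nn P s0 i
            · exact Or.inr h
            · exact Or.inl ⟨h, hv⟩
          · rintro (⟨_, hv⟩ | rfl) <;> assumption
        rwa [← this] at hj
      · exact hrej F (fun v hv => by
          rcases Finset.mem_insert.mp (hF hv) with h | h
          · exact absurd h (by rintro rfl; exact hm hv)
          · exact h)
    · intro v hv
      rcases Finset.mem_insert.mp hv with rfl | hv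
      · exact ⟨i, le_rfl, rfl⟩
      · obtain ⟨u, hu, rfl⟩ := hSD v hv
        exact ⟨u, hu.trans (le_of_lt hii), rfl⟩)

noncomputable def greedy (h0 : rej P ∅ s0.M) : ℕ → GState P s0
  | 0 => ⟨(0, ∅), by
      constructor
      · intro F hF
        rw [Finset.subset_empty.mp hF]
        exact ⟨0, by simpa [states] using rej_mono P (subset_rfl) h0⟩
      · simp⟩
  | (t+1) => (greedyStep P s0 (greedy h0 t)).1

theorem galvin_main :

    (∃ M : Set ℕ, M.Infinite ∧ ∀ F : Finset ℕ, ↑F ⊆ M → ¬ P F) ∨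
    (∃ M : Set ℕ, M.Infinite ∧ ∀ L ⊆ M, L.Infinite →
      ∃ E : Finset ℕ, Init E L ∧ P E) := by
  classical
  obtain ⟨N, _, hNinf, hdec⟩ := exists_decide P ∅ Set.univ Set.infinite_univ
  rcases hdec with hacc | hrej
  · -- case (b)
    refine Or.inr ⟨N, hNinf, ?_⟩
    intro L hL hLi
    obtain ⟨E, hE1, hE2⟩ := hacc L hL hLi
    exact ⟨E, hE1, by simpa using hE2⟩
  · -- case (a)
    set s0 : St P := ⟨∅, N, hNinf, by
      intro F hF
      rw [Finset.mem_powerset, Finset.subset_empty] at hF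
      subst hF
      exact Or.inr hrej, by simp⟩ with hs0
    have h0 : rej P ∅ s0.M := hrej
    set g := greedy P s0 h0 with hg
    have hg_succ : ∀ t, g (t+1) = (greedyStep P s0 (g t)).1 := fun t => rfl
    set w : ℕ → ℕ := fun t => nn P s0 ((g (t+1)).1.1) with hw
    have hidx : StrictMono (fun t => (g t).1.1) := by
      apply strictMono_nat_of_lt_succ
      intro t
      rw [hg_succ t]
      exact (greedyStep P s0 (g t)).2.1
    have hwsm : StrictMono w := by
      intro t t' h
      exact (nn_strictMono P s0) (hidx (by omega : t + 1 < t' + 1))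
    have hSsucc : ∀ t, ((g t).1.2 : Finset ℕ) ⊆ (g (t+1)).1.2 := by
      intro t
      rw [hg_succ t, (greedyStep P s0 (g t)).2.2]
      exact Finset.subset_insert _ _
    have hSmono : ∀ {t t'}, t ≤ t' → ((g t).1.2 : Finset ℕ) ⊆ (g t').1.2 := by
      intro t t' h
      induction t' with
      | zero => rw [Nat.le_zero.mp h]
      | succ t' ih =>
        rcases Nat.lt_or_ge t (t'+1) with hl | hge
        · exact (ih (by omega)).trans (hSsucc t')
        · rw [le_antisymm h hge]
    have hwm : ∀ t, w t ∈ ((g (t+1)).1.2 : Finset ℕ) := by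
      intro t
      rw [hg_succ t, (greedyStep P s0 (g t)).2.2]
      exact Finset.mem_insert_self _ _
    refine Or.inl ⟨Set.range w, Set.infinite_range_of_injective hwsm.injective, ?_⟩
    intro F hF hPF
    have : ∀ v ∈ F, ∃ t, v = w t := by
      intro v hv
      obtain ⟨t, ht⟩ := hF hv
      exact ⟨t, ht.symm⟩
    choose tv htv using this
    classical
    set T := (F.sup (fun v => if h : v ∈ F then tv v h else 0)) + 1 with hT
    have hFT : F ⊆ (g T).1.2 := by
      intro v hv
      set t0 := tv v hv with ht0
      have h1 : t0 + 1 ≤ T := by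
        have hle := Finset.le_sup (f := fun v => if h : v ∈ F then tv v h else 0) hv
        simp only [dif_pos hv, ← ht0] at hle
        omega
      have h2 : v ∈ ((g (t0 + 1)).1.2 : Finset ℕ) := by
        rw [htv v hv]; exact hwm t0
      exact hSmono h1 h2
    obtain ⟨j, hj⟩ := (g T).2.1 F hFT
    exact hj _ subset_rfl (states P s0 j).hM (P_of_acc_self P hPF _)

end Fusion

open Set


variable {S : Type*} (A B : ℕ → Set S)

/-- the alternating pattern on `E` is realized -/
def AltOk (E : Finset ℕ) : Prop :=
  ∃ s : S, ∀ n ∈ E, (Odd (E.filter (fun m => m ≤ n)).card → s ∈ A n) ∧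
    (¬ Odd (E.filter (fun m => m ≤ n)).card → s ∈ B n)

lemma exists_pattern (f : ℕ → ℕ) (hf : StrictMono f) (T : Finset ℕ) :
    ∀ F ⊆ T, ∃ E : Finset ℕ,
      (∀ v ∈ E, ∃ i ∈ T, v = f (2*i) ∨ v = f (2*i+1)) ∧
      (∀ i ∈ T, f (2*i+1) ∈ E) ∧
      (∀ i ∈ T, (Odd ((E.filter (fun m => m ≤ f (2*i+1))).card) ↔ i ∈ F)) := by
  classical
  induction T using Finset.induction_on_max with
  | empty => exact fun F _ => ⟨∅, by simp, by simp, by simp⟩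
  | insert i T' hlt ih =>
    intro F hFT
    obtain ⟨E', hprov, hmem, hpar⟩ := ih (F ∩ T') (Finset.inter_subset_right)
    have hbound : ∀ v ∈ E', v < f (2*i) := by
      intro v hv
      obtain ⟨j, hjT, hj⟩ := hprov v hv
      have hji : j < i := hlt j hjT
      rcases hj with rfl | rfl
      · exact hf (by omega)
      · exact hf (by omega)
    have hne1 : f (2*i+1) ∉ E' := fun h => absurd (hbound _ h) (by
      simp only [not_lt]; exact le_of_lt (hf (by omega)))
    have hne2 : f (2*i) ∉ E' := fun h => absurd (hbound _ h) (by simp)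
    have hne3 : f (2*i) ≠ f (2*i+1) := fun h => by
      have := hf.injective h; omega
    -- choose whether to add a filler
    by_cases hpar2 : Odd (E'.card + 1) ↔ i ∈ F
    · refine ⟨insert (f (2*i+1)) E', ?_, ?_, ?_⟩
      · intro v hv
        rcases Finset.mem_insert.mp hv with rfl | hv
        · exact ⟨i, Finset.mem_insert_self _ _, Or.inr rfl⟩
        · obtain ⟨j, hj1, hj2⟩ := hprov v hv
          exact ⟨j, Finset.mem_insert_of_mem hj1, hj2⟩
      · intro j hj
        rcases Finset.mem_insert.mp hj with rfl | hj
        · exact Finset.mem_insert_self _ _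
        · exact Finset.mem_insert_of_mem (hmem j hj)
      · intro j hj
        rcases Finset.mem_insert.mp hj with rfl | hj
        · have hfe : (insert (f (2*j+1)) E').filter (fun m => m ≤ f (2*j+1)) =
              insert (f (2*j+1)) E' := by
            apply Finset.filter_true_of_mem
            intro v hv
            rcases Finset.mem_insert.mp hv with rfl | hv
            · exact le_rfl
            · exact le_of_lt ((hbound v hv).trans (hf (by omega)))
          rw [hfe, Finset.card_insert_of_notMem hne1]
          exact hpar2
        · have hj2i : f (2*j+1) < f (2*i+1) := hf (by have := hlt j hj; omega)
          have hfe : (insert (f (2*i+1)) E').filter (fun m => m ≤ f (2*j+1)) =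
              E'.filter (fun m => m ≤ f (2*j+1)) := by
            rw [Finset.filter_insert, if_neg (by simp only [not_le]; exact hj2i)]
          rw [hfe]
          rw [hpar j hj]
          simp [Finset.mem_inter, hj]
      -- else add filler f (2*i)
    · refine ⟨insert (f (2*i)) (insert (f (2*i+1)) E'), ?_, ?_, ?_⟩
      · intro v hv
        rcases Finset.mem_insert.mp hv with rfl | hv
        · exact ⟨i, Finset.mem_insert_self _ _, Or.inl rfl⟩
        rcases Finset.mem_insert.mp hv with rfl | hv
        · exact ⟨i, Finset.mem_insert_self _ _, Or.inr rfl⟩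
        · obtain ⟨j, hj1, hj2⟩ := hprov v hv
          exact ⟨j, Finset.mem_insert_of_mem hj1, hj2⟩
      · intro j hj
        rcases Finset.mem_insert.mp hj with rfl | hj
        · exact Finset.mem_insert_of_mem (Finset.mem_insert_self _ _)
        · exact Finset.mem_insert_of_mem (Finset.mem_insert_of_mem (hmem j hj))
      · intro j hj
        rcases Finset.mem_insert.mp hj with rfl | hj
        · have hfe : (insert (f (2*j)) (insert (f (2*j+1)) E')).filter
              (fun m => m ≤ f (2*j+1)) = insert (f (2*j)) (insert (f (2*j+1)) E') := by
            apply Finset.filter_true_of_mem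
            intro v hv
            rcases Finset.mem_insert.mp hv with rfl | hv
            · exact le_of_lt (hf (by omega))
            rcases Finset.mem_insert.mp hv with rfl | hv
            · exact le_rfl
            · exact le_of_lt ((hbound v hv).trans (hf (by omega)))
          have hnm : f (2*j) ∉ insert (f (2*j+1)) E' := by
            simp only [Finset.mem_insert]
            push_neg
            exact ⟨hne3, hne2⟩
          rw [hfe, Finset.card_insert_of_notMem hnm, Finset.card_insert_of_notMem hne1]
          rcases Nat.even_or_odd E'.card with he | ho
          · have h1 : Odd (E'.card + 1) := he.add_one
            have hiF : j ∉ F := by tauto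
            have h3 : ¬ Odd (E'.card + 1 + 1) := by
              simp [Nat.odd_iff, Nat.even_iff] at he ⊢; omega
            tauto
          · have h1 : ¬ Odd (E'.card + 1) := by
              simp [Nat.odd_iff] at ho ⊢; omega
            have hiF : j ∈ F := by tauto
            have h3 : Odd (E'.card + 1 + 1) := by
              simp [Nat.odd_iff] at ho ⊢; omega
            tauto
        · have hj2i : f (2*j+1) < f (2*i) := hf (by have := hlt j hj; omega)
          have hn1 : ¬ (f (2*i) ≤ f (2*j+1)) := by
            simp only [not_le]; exact hj2i
          have hn2 : ¬ (f (2*i+1) ≤ f (2*j+1)) := by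
            simp only [not_le]; exact hj2i.trans (hf (by omega))
          have hfe : (insert (f (2*i)) (insert (f (2*i+1)) E')).filter
              (fun m => m ≤ f (2*j+1)) = E'.filter (fun m => m ≤ f (2*j+1)) := by
            rw [Finset.filter_insert, if_neg hn1, Finset.filter_insert, if_neg hn2]
          rw [hfe, hpar j hj]
          simp [Finset.mem_inter, hj]

theorem rosenthal_pairs :
    (∃ k : ℕ → ℕ, StrictMono k ∧ ∀ F G : Finset ℕ, Disjoint F G →
      ∃ s : S, (∀ i ∈ F, s ∈ A (k i)) ∧ (∀ i ∈ G, s ∈ B (k i))) ∨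
    (∃ k : ℕ → ℕ, StrictMono k ∧ ∀ s : S,
      {j | s ∈ A (k j)}.Finite ∨ {j | s ∈ B (k j)}.Finite) := by
  classical
  rcases galvin_main (fun E => ¬ AltOk A B E) with ⟨M, hMinf, hM⟩ | ⟨M, hMinf, hM⟩
  · -- independent case
    left
    set f := Nat.nth (· ∈ M) with hfdef
    have hfsm : StrictMono f := Nat.nth_strictMono hMinf
    have hfm : ∀ n, f n ∈ M := fun n => Nat.nth_mem_of_infinite hMinf n
    refine ⟨fun i => f (2*i+1), fun i j h => hfsm (by omega), ?_⟩
    intro F G hFG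
    obtain ⟨E, hprov, hmem, hpar⟩ := exists_pattern f hfsm (F ∪ G) F Finset.subset_union_left
    have hEM : ↑E ⊆ M := by
      intro v hv
      obtain ⟨j, _, hj⟩ := hprov v hv
      rcases hj with rfl | rfl <;> exact hfm _
    have halt : AltOk A B E := not_not.mp (hM E hEM)
    obtain ⟨s, hs⟩ := halt
    refine ⟨s, ?_, ?_⟩
    · intro i hi
      have h1 := hs (f (2*i+1)) (hmem i (Finset.mem_union_left _ hi))
      exact h1.1 ((hpar i (Finset.mem_union_left _ hi)).mpr hi)
    · intro i hi
      have hiF : i ∉ F := fun h => (Finset.disjoint_left.mp hFG h) hi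
      have h1 := hs (f (2*i+1)) (hmem i (Finset.mem_union_right _ hi))
      exact h1.2 (fun h => hiF ((hpar i (Finset.mem_union_right _ hi)).mp h))
  · -- convergent case
    right
    set k := Nat.nth (· ∈ M) with hkdef
    have hksm : StrictMono k := Nat.nth_strictMono hMinf
    have hkm : ∀ n, k n ∈ M := fun n => Nat.nth_mem_of_infinite hMinf n
    refine ⟨k, hksm, ?_⟩
    intro s
    by_contra hcon
    push_neg at hcon
    obtain ⟨hAinf, hBinf⟩ := hcon
    set HA := {n | n ∈ M ∧ s ∈ A n} with hHA
    set HB := {n | n ∈ M ∧ s ∈ B n} with hHB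
    have hHAinf : HA.Infinite := by
      have hAinf' : {j | s ∈ A (k j)}.Infinite := hAinf
      refine Set.Infinite.mono ?_ (hAinf'.image (Set.injOn_of_injective hksm.injective))
      rintro _ ⟨j, hj, rfl⟩
      exact ⟨hkm j, hj⟩
    have hHBinf : HB.Infinite := by
      have hBinf' : {j | s ∈ B (k j)}.Infinite := hBinf
      refine Set.Infinite.mono ?_ (hBinf'.image (Set.injOn_of_injective hksm.injective))
      rintro _ ⟨j, hj, rfl⟩
      exact ⟨hkm j, hj⟩
    have hif : ∀ n : ℕ, (if Even n then HA else HB).Infinite := by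
      intro n; split_ifs <;> assumption
    have hstep : ∀ (H : Set ℕ), H.Infinite → ∀ b : ℕ, ∃ m, m ∈ H ∧ b < m := by
      intro H hH b
      obtain ⟨m, hm⟩ := (hH.diff (Set.finite_Iic b)).nonempty
      exact ⟨m, hm.1, by simpa [not_le] using hm.2⟩
    set g : ℕ → ℕ := fun n => Nat.rec (Classical.choose (hstep _ (hif 0) 0))
      (fun n ih => Classical.choose (hstep _ (hif (n+1)) ih)) n with hgdef
    have hg0 : g 0 ∈ (if Even 0 then HA else HB) ∧ 0 < g 0 :=
      Classical.choose_spec (hstep _ (hif 0) 0)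
    have hgs : ∀ n, g (n+1) ∈ (if Even (n+1) then HA else HB) ∧ g n < g (n+1) :=
      fun n => Classical.choose_spec (hstep _ (hif (n+1)) (g n))
    have hgmem : ∀ n, g n ∈ (if Even n then HA else HB) := by
      intro n; cases n with
      | zero => exact hg0.1
      | succ n => exact (hgs n).1
    have hgsm : StrictMono g := strictMono_nat_of_lt_succ (fun n => (hgs n).2)
    have hgM : ∀ n, g n ∈ M := by
      intro n
      have := hgmem n
      split_ifs at this
      · exact this.1
      · exact this.1
    have hLM : Set.range g ⊆ M := by rintro _ ⟨n, rfl⟩; exact hgM n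
    obtain ⟨E, ⟨hEL, hEinit⟩, hnalt⟩ := hM (Set.range g) hLM
      (Set.infinite_range_of_injective hgsm.injective)
    refine hnalt ⟨s, ?_⟩
    intro n hn
    obtain ⟨t, rfl⟩ := hEL hn
    have hcard : (E.filter (fun m => m ≤ g t)).card = t + 1 := by
      have heq : E.filter (fun m => m ≤ g t) = Finset.image g (Finset.range (t+1)) := by
        ext v
        simp only [Finset.mem_filter, Finset.mem_image, Finset.mem_range]
        constructor
        · rintro ⟨hvE, hvle⟩
          obtain ⟨u, rfl⟩ := hEL hvE
          exact ⟨u, by have := hgsm.le_iff_le.mp hvle; omega, rfl⟩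
        · rintro ⟨u, hu, rfl⟩
          have hle : g u ≤ g t := hgsm.le_iff_le.mpr (by omega)
          exact ⟨hEinit (g u) ⟨u, rfl⟩ (g t) hn hle, hle⟩
      rw [heq, Finset.card_image_of_injective _ hgsm.injective, Finset.card_range]
    rw [hcard]
    constructor
    · intro hodd
      have hev : Even t := by simp [Nat.odd_iff, Nat.even_iff] at hodd ⊢; omega
      have hmem := hgmem t
      rw [if_pos hev] at hmem
      exact hmem.2
    · intro hnodd
      have hod : ¬ Even t := by simp [Nat.odd_iff, Nat.even_iff] at hnodd ⊢; omega
      have hmem := hgmem t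
      rw [if_neg hod] at hmem
      exact hmem.2
end RosGalvin

namespace RosAux
open Pointwise

/-- coefficient function of an element of l10 -/
def co (a : l10) : ℕ → ℝ := ((a : lp (fun _ : ℕ => ℝ) 1) : ℕ → ℝ)

lemma co_support_finite (a : l10) : (Function.support (co a)).Finite := a.2

lemma co_sub (a b : l10) : co (a - b) = co a - co b := by
  have h1 : ((a - b : l10) : lp (fun _ : ℕ => ℝ) 1) = (a : lp _ 1) - (b : lp _ 1) := rfl
  show ⇑((a - b : l10) : lp (fun _ : ℕ => ℝ) 1) = _
  rw [h1, lp.coeFn_sub]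
  rfl

variable {X : Type*} [AddCommGroup X] [Module ℝ X]

lemma T0_eq_sum (v : ℕ → X) (a : l10) (s : Finset ℕ)
    (hs : Function.support (co a) ⊆ ↑s) :
    T0 X v a = ∑ i ∈ s, co a i • v i := by
  apply finsum_eq_sum_of_support_subset
  intro n hn
  apply hs
  simp only [Function.mem_support] at hn ⊢
  intro h
  exact hn (by show co a n • v n = 0; rw [h, zero_smul])

lemma T0_sub (v : ℕ → X) (a b : l10) :
    T0 X v (a - b) = T0 X v a - T0 X v b := by
  classical
  set s := (co_support_finite a).toFinset ∪ (co_support_finite b).toFinset with hsdef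
  have hsa : Function.support (co a) ⊆ ↑s := by
    intro n hn; simp [hsdef, Set.Finite.mem_toFinset]; left; exact hn
  have hsb : Function.support (co b) ⊆ ↑s := by
    intro n hn; simp [hsdef, Set.Finite.mem_toFinset]; right; exact hn
  have hsab : Function.support (co (a - b)) ⊆ ↑s := by
    intro n hn
    rw [co_sub] at hn
    simp only [Function.mem_support, Pi.sub_apply] at hn
    by_contra h
    simp [hsdef, Set.Finite.mem_toFinset, Function.mem_support, not_or, not_not] at h
    exact hn (by rw [h.1, h.2, sub_zero])
  rw [T0_eq_sum v a s hsa, T0_eq_sum v b s hsb, T0_eq_sum v (a-b) s hsab,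
    ← Finset.sum_sub_distrib]
  apply Finset.sum_congr rfl
  intro i _
  rw [co_sub]
  simp [sub_smul]

lemma l10_norm (a : l10) (s : Finset ℕ) (hs : Function.support (co a) ⊆ ↑s) :
    ‖a‖ = ∑ i ∈ s, |co a i| := by
  have h1 : ‖a‖ = ‖(a : lp (fun _ : ℕ => ℝ) 1)‖ := rfl
  rw [h1, lp.norm_eq_tsum_rpow (by norm_num) _]
  simp only [ENNReal.toReal_one, Real.rpow_one]
  rw [tsum_eq_sum (s := s) (by
    intro n hn
    have : co a n = 0 := by
      by_contra h
      exact hn (hs (Function.mem_support.mpr h))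
    show ‖co a n‖ = 0
    rw [this, norm_zero])]
  rw [one_div_one, Real.rpow_one]
  apply Finset.sum_congr rfl
  intro i _
  exact Real.norm_eq_abs _

lemma absconv_sum_mem {X : Type*} [AddCommGroup X] [Module ℝ X] {U : Set X}
    (hb : Balanced ℝ U) (hc : Convex ℝ U) (h0 : (0:X) ∈ U)
    (s : Finset ℕ) (u : ℕ → X) (hu : ∀ i ∈ s, u i ∈ U) (a : ℕ → ℝ)
    (ha : ∑ i ∈ s, |a i| ≤ 1) : ∑ i ∈ s, a i • u i ∈ U := by
  classical
  set t := ∑ i ∈ s, |a i| with ht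
  have ht0 : 0 ≤ t := Finset.sum_nonneg (fun i _ => abs_nonneg _)
  rcases eq_or_lt_of_le ht0 with h | h
  · have hz : ∀ i ∈ s, a i = 0 := by
      intro i hi
      have := (Finset.sum_eq_zero_iff_of_nonneg (fun i _ => abs_nonneg (a i))).mp h.symm i hi
      exact abs_eq_zero.mp this
    rw [Finset.sum_congr rfl (fun i hi => by rw [hz i hi, zero_smul])]
    simpa using h0
  · set p : ℕ → X := fun i => if a i = 0 then u i else ((a i / |a i|)) • u i with hp
    have hpU : ∀ i ∈ s, p i ∈ U := by
      intro i hi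
      by_cases hai : a i = 0
      · simp [hp, hai]; exact hu i hi
      · simp only [hp, if_neg hai]
        apply hb.smul_mem ?_ (hu i hi)
        rw [Real.norm_eq_abs, abs_div, abs_abs, div_self (abs_ne_zero.mpr hai)]
    have hzmem : ∑ i ∈ s, (|a i| / t) • p i ∈ U := by
      apply hc.sum_mem
      · intro i _; positivity
      · rw [← Finset.sum_div, ← ht, div_self (ne_of_gt h)]
      · exact hpU
    have heq : ∑ i ∈ s, a i • u i = t • ∑ i ∈ s, (|a i| / t) • p i := by
      rw [Finset.smul_sum]
      apply Finset.sum_congr rfl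
      intro i _
      rw [smul_smul]
      by_cases hai : a i = 0
      · simp [hai, hp]
      · simp only [hp, if_neg hai, smul_smul]
        congr 1
        field_simp
    rw [heq]
    exact hb.smul_mem (by rw [Real.norm_eq_abs, abs_of_nonneg ht0]; exact ha) hzmem

variable {X : Type*} [AddCommGroup X] [Module ℝ X]

variable [TopologicalSpace X]

lemma indep_lower (v : ℕ → X) (Pol : Set (X →L[ℝ] ℝ)) (a b : ℝ) (hab : a < b)
    (h0 : (0 : X →L[ℝ] ℝ) ∈ Pol)
    (hInd : ∀ F G : Finset ℕ, Disjoint F G → ∃ φ : X →L[ℝ] ℝ,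
      (∀ i ∈ F, φ ∈ Pol ∧ φ (v i) < a) ∧ (∀ i ∈ G, φ ∈ Pol ∧ b < φ (v i))) :
    ∀ w : l10, ∃ φ ∈ Pol, ((b - a)/2) * ‖w‖ ≤ |φ (T0 X v w)| := by
  classical
  intro w
  set s := (co_support_finite w).toFinset with hsdef
  have hsupp : Function.support (co w) ⊆ ↑s := by
    intro n hn; simp [hsdef, Set.Finite.mem_toFinset]; exact hn
  have hnorm : ‖w‖ = ∑ i ∈ s, |co w i| := l10_norm w s hsupp
  have hT0 : T0 X v w = ∑ i ∈ s, co w i • v i := T0_eq_sum v w s hsupp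
  rcases Finset.eq_empty_or_nonempty s with hs0 | ⟨i0, hi0⟩
  · refine ⟨0, h0, ?_⟩
    rw [hnorm, hs0]
    simp
  · set F := s.filter (fun i => co w i < 0) with hF
    set G := s.filter (fun i => 0 ≤ co w i) with hG
    have hFG : Disjoint F G := by
      rw [Finset.disjoint_left]
      intro i hiF hiG
      rw [hF, Finset.mem_filter] at hiF
      rw [hG, Finset.mem_filter] at hiG
      linarith [hiF.2, hiG.2]
    obtain ⟨φ₁, hφ₁F, hφ₁G⟩ := hInd F G hFG
    obtain ⟨φ₂, hφ₂G, hφ₂F⟩ := hInd G F hFG.symm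
    have hφ₁Pol : φ₁ ∈ Pol := by
      rcases lt_or_ge (co w i0) 0 with h | h
      · exact (hφ₁F i0 (by rw [hF, Finset.mem_filter]; exact ⟨hi0, h⟩)).1
      · exact (hφ₁G i0 (by rw [hG, Finset.mem_filter]; exact ⟨hi0, h⟩)).1
    have hφ₂Pol : φ₂ ∈ Pol := by
      rcases lt_or_ge (co w i0) 0 with h | h
      · exact (hφ₂F i0 (by rw [hF, Finset.mem_filter]; exact ⟨hi0, h⟩)).1
      · exact (hφ₂G i0 (by rw [hG, Finset.mem_filter]; exact ⟨hi0, h⟩)).1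
    have happ : ∀ (φ : X →L[ℝ] ℝ), φ (T0 X v w) = ∑ i ∈ s, co w i * φ (v i) := by
      intro φ
      rw [hT0, map_sum]
      apply Finset.sum_congr rfl
      intro i _
      rw [ContinuousLinearMap.map_smul]
      rfl
    have hkey : (b - a) * ‖w‖ ≤ φ₁ (T0 X v w) - φ₂ (T0 X v w) := by
      rw [happ φ₁, happ φ₂, ← Finset.sum_sub_distrib, hnorm, Finset.mul_sum]
      apply Finset.sum_le_sum
      intro i hi
      rcases lt_or_ge (co w i) 0 with h | h
      · have hiF : i ∈ F := by rw [hF, Finset.mem_filter]; exact ⟨hi, h⟩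
        have h1 : φ₁ (v i) < a := (hφ₁F i hiF).2
        have h2 : b < φ₂ (v i) := (hφ₂F i hiF).2
        have habs : |co w i| = -(co w i) := abs_of_neg h
        nlinarith
      · have hiG : i ∈ G := by rw [hG, Finset.mem_filter]; exact ⟨hi, h⟩
        have h1 : b < φ₁ (v i) := (hφ₁G i hiG).2
        have h2 : φ₂ (v i) < a := (hφ₂G i hiG).2
        have habs : |co w i| = co w i := abs_of_nonneg h
        nlinarith
    have hnn : 0 ≤ ‖w‖ := norm_nonneg _
    rcases le_total |φ₂ (T0 X v w)| |φ₁ (T0 X v w)| with h | h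
    · refine ⟨φ₁, hφ₁Pol, ?_⟩
      have := abs_le.mp (le_refl |φ₂ (T0 X v w)|)
      have h1 : φ₁ (T0 X v w) ≤ |φ₁ (T0 X v w)| := le_abs_self _
      have h2 : -|φ₂ (T0 X v w)| ≤ φ₂ (T0 X v w) := neg_abs_le _
      nlinarith
    · refine ⟨φ₂, hφ₂Pol, ?_⟩
      have h1 : φ₁ (T0 X v w) ≤ |φ₁ (T0 X v w)| := le_abs_self _
      have h2 : -|φ₂ (T0 X v w)| ≤ φ₂ (T0 X v w) := neg_abs_le _
      nlinarith

lemma embedding_of_lower [IsTopologicalAddGroup X] [ContinuousSMul ℝ X] (v : ℕ → X)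
    (hUb : ∀ W ∈ nhds (0:X), ∃ (U' : Set X) (c : ℝ), 0 < c ∧ Balanced ℝ U' ∧
      Convex ℝ U' ∧ (∀ n, v n ∈ c • U') ∧ U' ⊆ W)
    (U : Set X) (hU : U ∈ nhds (0:X)) (δ : ℝ) (hδ : 0 < δ)
    (hlow : ∀ w : l10, ∃ φ : X →L[ℝ] ℝ, (∀ y ∈ U, |φ y| ≤ 1) ∧
      δ * ‖w‖ ≤ |φ (T0 X v w)|) :
    Topology.IsEmbedding (T0 X v) := by
  classical
  have hsub : ∀ (w : l10) (t : ℝ), 0 < t → T0 X v w ∈ t • U → ‖w‖ ≤ t / δ := by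
    intro w t ht hmem
    obtain ⟨φ, hφU, hφl⟩ := hlow w
    obtain ⟨u, huU, hueq⟩ := Set.mem_smul_set.mp hmem
    have h1 : |φ (T0 X v w)| ≤ t := by
      rw [← hueq, map_smul]
      rw [smul_eq_mul, abs_mul, abs_of_pos ht]
      have := hφU u huU
      nlinarith
    rw [le_div_iff₀ hδ, mul_comm]
    linarith
  have hcont : ∀ (a₀ : l10) (W : Set X), W ∈ nhds (T0 X v a₀) →
      T0 X v ⁻¹' W ∈ nhds a₀ := by
    intro a₀ W hW
    set V := (fun z : X => z + T0 X v a₀) ⁻¹' W with hVdef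
    have hV : V ∈ nhds (0:X) := by
      apply ContinuousAt.preimage_mem_nhds
      · exact (continuous_id.add continuous_const).continuousAt
      · simpa using hW
    obtain ⟨U', c, hc, hbal, hconv, hvmem, hU'V⟩ := hUb V hV
    have h0U' : (0:X) ∈ U' := by
      obtain ⟨u, hu, -⟩ := Set.mem_smul_set.mp (hvmem 0)
      have := hbal.smul_mem (a := (0:ℝ)) (by simp) hu
      simpa using this
    choose u huU' hueq using fun n => Set.mem_smul_set.mp (hvmem n)
    have hball : Metric.closedBall a₀ (1/c) ⊆ T0 X v ⁻¹' W := by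
      intro b hb
      set w := b - a₀ with hwdef
      have hbw : ‖w‖ ≤ 1/c := by
        rw [hwdef, ← dist_eq_norm]
        exact Metric.mem_closedBall.mp hb
      set s := (co_support_finite w).toFinset with hsdef
      have hsupp : Function.support (co w) ⊆ ↑s := by
        intro n hn; simp [hsdef, Set.Finite.mem_toFinset]; exact hn
      have hmemU' : T0 X v w ∈ U' := by
        rw [T0_eq_sum v w s hsupp]
        have heq : ∀ i ∈ s, co w i • v i = (c * co w i) • u i := by
          intro i _
          rw [← hueq i, smul_smul, mul_comm]
        rw [Finset.sum_congr rfl heq]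
        apply absconv_sum_mem hbal hconv h0U' s u (fun i _ => huU' i)
        have : ∑ i ∈ s, |c * co w i| = c * ∑ i ∈ s, |co w i| := by
          rw [Finset.mul_sum]
          apply Finset.sum_congr rfl
          intro i _
          rw [abs_mul, abs_of_pos hc]
        rw [this, ← l10_norm w s hsupp]
        calc c * ‖w‖ ≤ c * (1/c) := by nlinarith [norm_nonneg w]
        _ = 1 := by field_simp
      have := hU'V hmemU'
      have hfin : T0 X v w + T0 X v a₀ ∈ W := this
      have heq2 : T0 X v w + T0 X v a₀ = T0 X v b := by
        rw [hwdef, T0_sub]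
        abel
      rw [heq2] at hfin
      exact hfin
    exact Filter.mem_of_superset (Metric.closedBall_mem_nhds a₀ (by positivity)) hball
  constructor
  · rw [Topology.isInducing_iff_nhds]
    intro a₀
    apply le_antisymm
    · rw [← Filter.map_le_iff_le_comap]
      intro W hW
      exact hcont a₀ W hW
    · intro V hV
      obtain ⟨ε, hε, hballV⟩ := Metric.nhds_basis_closedBall.mem_iff.mp hV
      set W := (fun y : X => y - T0 X v a₀) ⁻¹' ((δ * ε) • U) with hWdef
      have hW : W ∈ nhds (T0 X v a₀) := by
        apply ContinuousAt.preimage_mem_nhds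
        · exact (continuous_id.sub continuous_const).continuousAt
        · have hne : (δ * ε : ℝ) ≠ 0 := by positivity
          simpa using (set_smul_mem_nhds_zero_iff hne).mpr hU
      refine Filter.mem_comap.mpr ⟨W, hW, ?_⟩
      intro b hb
      have hmem : T0 X v (b - a₀) ∈ (δ * ε) • U := by
        rw [T0_sub]
        exact hb
      have := hsub (b - a₀) (δ * ε) (by positivity) hmem
      have hdist : ‖b - a₀‖ ≤ ε := by
        rw [mul_comm] at this
        rw [mul_div_assoc, div_self (ne_of_gt hδ), mul_one] at this
        exact this
      apply hballV
      rw [Metric.mem_closedBall, dist_eq_norm]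
      exact hdist
  · intro a b hab
    have h : T0 X v (a - b) = 0 := by rw [T0_sub, hab, sub_self]
    obtain ⟨φ, -, hφl⟩ := hlow (a - b)
    rw [h, map_zero, abs_zero] at hφl
    have h1 : ‖a - b‖ ≤ 0 := by nlinarith [norm_nonneg (a - b)]
    have := norm_le_zero_iff.mp h1
    exact sub_eq_zero.mp this


lemma transfer {T : Set ℕ} (hT : T.Finite) (w : ℕ → ℕ) (j : ℕ)
    (hw : ∀ i i', j ≤ i → i < i' → w i < w i') (Q : ℕ → Prop)
    (h : ∀ i, j ≤ i → Q i → w i ∈ T) : {i | Q i}.Finite := by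
  have hsub : {i | Q i} ⊆ Set.Iio j ∪ (Set.Ici j ∩ w ⁻¹' T) := by
    intro i hi
    rcases lt_or_ge i j with h1 | h1
    · exact Or.inl h1
    · exact Or.inr ⟨h1, h i h1 hi⟩
  refine Set.Finite.subset (Set.Finite.union (Set.finite_Iio j) ?_) hsub
  by_contra hin
  have hin' : (Set.Ici j ∩ w ⁻¹' T).Infinite := hin
  have hinj : Set.InjOn w (Set.Ici j ∩ w ⁻¹' T) := by
    intro i hi i' hi' heq
    by_contra hne
    rcases lt_or_gt_of_ne hne with hlt | hgt
    · exact absurd heq (ne_of_lt (hw i i' hi.1 hlt))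
    · exact absurd heq.symm (ne_of_lt (hw i' i hi'.1 hgt))
  have himg : (w '' (Set.Ici j ∩ w ⁻¹' T)).Infinite := hin'.image hinj
  have himsub : w '' (Set.Ici j ∩ w ⁻¹' T) ⊆ T := by
    rintro _ ⟨i, hi, rfl⟩
    exact hi.2
  exact (himg.mono himsub) hT

end RosAux


/-- `x` is an ℓ¹-sequence: `T0` is an isomorphism (a homeomorphic embedding) onto its image. -/
def IsL1Sequence (X : Type*) [AddCommGroup X] [Module ℝ X] [TopologicalSpace X]
    (x : ℕ → X) : Prop :=
  Topology.IsEmbedding (T0 X x)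

theorem stmt10 (X : Type*) [AddCommGroup X] [Module ℝ X] [TopologicalSpace X]
    [IsTopologicalAddGroup X] [ContinuousSMul ℝ X] [LocallyConvexSpace ℝ X] [T2Space X]
    [TopologicalSpace.MetrizableSpace X]
    (x : ℕ → X) (hx : Bornology.IsVonNBounded ℝ (Set.range x)) :
    ∃ k : ℕ → ℕ, StrictMono k ∧
      ((∀ φ : X →L[ℝ] ℝ, ∃ r : ℝ,
          Filter.Tendsto (fun j => φ (x (k j))) Filter.atTop (nhds r)) ∨
        IsL1Sequence X (x ∘ k)) := by
  classical
  open Pointwise RosAux in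
  letI : MetricSpace X := TopologicalSpace.metrizableSpaceMetric X
  obtain ⟨U, hUP, hUb⟩ := (nhds_hasBasis_absConvex ℝ X).exists_antitone_subbasis
  have hUmem : ∀ m, U m ∈ nhds (0:X) := fun m => (hUP m).1
  have hUbal : ∀ m, Balanced ℝ (U m) := fun m => (hUP m).2.1
  have hUconv : ∀ m, Convex ℝ (U m) := fun m => (hUP m).2.2
  have hUbasis : ∀ W ∈ nhds (0:X), ∃ m, U m ⊆ W := by
    intro W hW
    obtain ⟨m, -, h⟩ := hUb.toHasBasis.mem_iff.mp hW
    exact ⟨m, h⟩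
  set Pol : ℕ → Set (X →L[ℝ] ℝ) := fun m => {φ | ∀ y ∈ U m, |φ y| ≤ 1} with hPoldef
  have hPol0 : ∀ m, (0 : X →L[ℝ] ℝ) ∈ Pol m := by
    intro m y _
    simp
  have hbound : ∀ m, ∃ c : ℝ, 0 < c ∧ (∀ n, x n ∈ c • U m) ∧
      (∀ φ ∈ Pol m, ∀ n, |φ (x n)| ≤ c) := by
    intro m
    obtain ⟨r, hr, habs⟩ := (hx (hUmem m)).exists_pos
    set c := max r 1 with hcdef
    have hc : (0:ℝ) < c := lt_of_lt_of_le one_pos (le_max_right _ _)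
    have hsub : Set.range x ⊆ c • U m := by
      apply habs c
      rw [Real.norm_eq_abs, abs_of_pos hc]
      exact le_max_left _ _
    refine ⟨c, hc, fun n => hsub (Set.mem_range_self n), ?_⟩
    intro φ hφ n
    obtain ⟨u, hu, hueq⟩ := Set.mem_smul_set.mp (hsub (Set.mem_range_self n))
    rw [← hueq, map_smul, smul_eq_mul, abs_mul, abs_of_pos hc]
    have := hφ u hu
    nlinarith
  by_cases hP : ∃ (k : ℕ → ℕ), StrictMono k ∧ ∃ (m : ℕ) (a b : ℚ), (a:ℝ) < (b:ℝ) ∧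
      ∀ F G : Finset ℕ, Disjoint F G → ∃ φ : X →L[ℝ] ℝ,
        (∀ i ∈ F, φ ∈ Pol m ∧ φ (x (k i)) < (a:ℝ)) ∧
        (∀ i ∈ G, φ ∈ Pol m ∧ (b:ℝ) < φ (x (k i)))
  · -- ℓ¹ case
    obtain ⟨k, hk, m, a, b, hab, hInd⟩ := hP
    refine ⟨k, hk, Or.inr ?_⟩
    show Topology.IsEmbedding (T0 X (x ∘ k))
    have hlow := indep_lower (x ∘ k) (Pol m) (a:ℝ) (b:ℝ) hab (hPol0 m) hInd
    apply embedding_of_lower (x ∘ k) ?_ (U m) (hUmem m) (((b:ℝ) - (a:ℝ))/2) (by linarith)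
    · intro w
      obtain ⟨φ, hφ, hφl⟩ := hlow w
      exact ⟨φ, hφ, hφl⟩
    · intro W hW
      obtain ⟨m', hm'⟩ := hUbasis W hW
      obtain ⟨c, hc, hcs, -⟩ := hbound m'
      exact ⟨U m', c, hc, hUbal m', hUconv m', fun n => hcs (k n), hm'⟩
  · -- weakly Cauchy case
    have hch : ∀ (f : ℕ → ℕ), StrictMono f → ∀ (m : ℕ) (a b : ℚ),
        ∃ g : ℕ → ℕ, StrictMono g ∧ ((a:ℝ) < (b:ℝ) → ∀ φ ∈ Pol m,
          {j | φ (x (f (g j))) < (a:ℝ)}.Finite ∨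
          {j | (b:ℝ) < φ (x (f (g j)))}.Finite) := by
      intro f hf m a b
      by_cases hab : (a:ℝ) < (b:ℝ)
      · rcases RosGalvin.rosenthal_pairs
            (fun n => {φ : X →L[ℝ] ℝ | φ ∈ Pol m ∧ φ (x (f n)) < (a:ℝ)})
            (fun n => {φ : X →L[ℝ] ℝ | φ ∈ Pol m ∧ (b:ℝ) < φ (x (f n))}) with
          ⟨g, hg, hind⟩ | ⟨g, hg, hconv⟩
        · exfalso
          apply hP
          refine ⟨f ∘ g, hf.comp hg, m, a, b, hab, ?_⟩
          intro F G hFG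
          obtain ⟨φ, h1, h2⟩ := hind F G hFG
          exact ⟨φ, fun i hi => h1 i hi, fun i hi => h2 i hi⟩
        · refine ⟨g, hg, fun _ φ hφ => ?_⟩
          rcases hconv φ with h | h
          · left
            apply h.subset
            intro j hj
            exact ⟨hφ, hj⟩
          · right
            apply h.subset
            intro j hj
            exact ⟨hφ, hj⟩
      · exact ⟨id, strictMono_id, fun h => absurd h hab⟩
    set e : ℕ → ℕ × ℚ × ℚ := fun n => (Denumerable.eqv (ℕ × ℚ × ℚ)).symm n with hedef
    set pick : (ℕ → ℕ) → ℕ → (ℕ → ℕ) := fun f j =>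
      if h : StrictMono f then (hch f h (e j).1 (e j).2.1 (e j).2.2).choose else id
      with hpickdef
    set σ : ℕ → (ℕ → ℕ) := fun n => Nat.rec id (fun j f => f ∘ pick f j) n with hσdef
    have hσs : ∀ j, σ (j+1) = σ j ∘ pick (σ j) j := fun j => rfl
    have hσsm : ∀ j, StrictMono (σ j) := by
      intro j
      induction j with
      | zero => exact strictMono_id
      | succ j ih =>
        rw [hσs]
        refine ih.comp ?_
        show StrictMono (pick (σ j) j)
        rw [hpickdef]
        simp only [dif_pos ih]
        exact (hch (σ j) ih (e j).1 (e j).2.1 (e j).2.2).choose_spec.1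
    have hpickeq : ∀ j, pick (σ j) j =
        (hch (σ j) (hσsm j) (e j).1 (e j).2.1 (e j).2.2).choose := by
      intro j
      rw [hpickdef]
      simp only [dif_pos (hσsm j)]
    have hpicksm : ∀ j, StrictMono (pick (σ j) j) := by
      intro j
      rw [hpickeq j]
      exact (hch (σ j) (hσsm j) (e j).1 (e j).2.1 (e j).2.2).choose_spec.1
    have hpickconv : ∀ j, (((e j).2.1 : ℝ) < ((e j).2.2 : ℝ)) → ∀ φ ∈ Pol (e j).1,
        {i | φ (x (σ (j+1) i)) < ((e j).2.1 : ℝ)}.Finite ∨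
        {i | ((e j).2.2 : ℝ) < φ (x (σ (j+1) i))}.Finite := by
      intro j
      have h := (hch (σ j) (hσsm j) (e j).1 (e j).2.1 (e j).2.2).choose_spec.2
      rw [hσs j, hpickeq j]
      simp only [Function.comp_apply]
      exact h
    set d : ℕ → ℕ := fun i => σ i i with hddef
    have hdm : StrictMono d := by
      apply strictMono_nat_of_lt_succ
      intro i
      show σ i i < σ (i+1) (i+1)
      rw [hσs i]
      calc σ i i < σ i (i+1) := hσsm i (by omega)
        _ ≤ σ i (pick (σ i) i (i+1)) := (hσsm i).monotone ((hpicksm i).le_apply)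
    set τ : ℕ → ℕ → (ℕ → ℕ) := fun j i =>
      Nat.rec id (fun i' t => if j ≤ i' then t ∘ pick (σ i') i' else id) i with hτdef
    have hτs : ∀ j i, τ j (i+1) = if j ≤ i then τ j i ∘ pick (σ i) i else id :=
      fun j i => rfl
    have hτself : ∀ j, τ j j = id := by
      intro j
      cases j with
      | zero => rfl
      | succ i => rw [hτs, if_neg (by omega)]
    have hfact : ∀ j i, j ≤ i → σ i = σ j ∘ τ j i ∧ StrictMono (τ j i) := by
      intro j i h
      induction i, h using Nat.le_induction with
      | base =>
        rw [hτself]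
        exact ⟨(Function.comp_id _).symm, strictMono_id⟩
      | succ i hji ih =>
        rw [hτs, if_pos hji, hσs]
        constructor
        · rw [ih.1]
          rfl
        · exact ih.2.comp (hpicksm i)
    have hdiagfac : ∀ j i, j ≤ i → d i = σ j (τ j i i) := by
      intro j i h
      show σ i i = _
      rw [(hfact j i h).1]
      rfl
    have hτdiag : ∀ j i i', j ≤ i → i < i' → τ j i i < τ j i' i' := by
      intro j i i' hji hii'
      induction i', hii' using Nat.le_induction with
      | base =>
        rw [hτs, if_pos hji]
        calc τ j i i < τ j i (i+1) := (hfact j i hji).2 (by omega)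
          _ ≤ τ j i (pick (σ i) i (i+1)) := (hfact j i hji).2.monotone ((hpicksm i).le_apply)
      | succ i' hii'' ih =>
        have hji' : j ≤ i' := by omega
        rw [hτs, if_pos hji']
        calc τ j i i < τ j i' i' := ih
          _ < τ j i' (i'+1) := (hfact j i' hji').2 (by omega)
          _ ≤ τ j i' (pick (σ i') i' (i'+1)) :=
            (hfact j i' hji').2.monotone ((hpicksm i').le_apply)
    refine ⟨d, hdm, Or.inl ?_⟩
    intro φ
    have hφPol : ∃ m, φ ∈ Pol m := by
      have hcont : φ ⁻¹' (Metric.ball (0:ℝ) 1) ∈ nhds (0:X) := by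
        apply φ.continuous.continuousAt.preimage_mem_nhds
        rw [map_zero]
        exact Metric.ball_mem_nhds 0 one_pos
      obtain ⟨m, hm⟩ := hUbasis _ hcont
      refine ⟨m, fun y hy => le_of_lt ?_⟩
      have := hm hy
      simpa [Real.dist_eq] using this
    obtain ⟨m, hφm⟩ := hφPol
    obtain ⟨c, hc, -, hcb⟩ := hbound m
    set r : ℕ → ℝ := fun i => φ (x (d i)) with hrdef
    have hrb : ∀ i, |r i| ≤ c := fun i => hcb φ hφm (d i)
    have hBdd1 : Filter.IsBoundedUnder (· ≤ ·) Filter.atTop r :=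
      Filter.isBoundedUnder_of ⟨c, fun i => (abs_le.mp (hrb i)).2⟩
    have hBdd2 : Filter.IsBoundedUnder (· ≥ ·) Filter.atTop r :=
      Filter.isBoundedUnder_of ⟨-c, fun i => (abs_le.mp (hrb i)).1⟩
    have hosc : ∀ (a b : ℚ), (a:ℝ) < (b:ℝ) →
        {i | r i < (a:ℝ)}.Finite ∨ {i | (b:ℝ) < r i}.Finite := by
      intro a b hab
      set j := Denumerable.eqv (ℕ × ℚ × ℚ) (m, a, b) with hjdef
      have hej : e j = (m, a, b) := by
        rw [hedef]
        exact Equiv.symm_apply_apply _ _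
      have h1 : (e j).1 = m := by rw [hej]
      have h2 : (e j).2.1 = a := by rw [hej]
      have h3 : (e j).2.2 = b := by rw [hej]
      have hconvj := hpickconv j
      rw [h1, h2, h3] at hconvj
      rcases hconvj hab φ hφm with hT | hT
      · left
        apply transfer hT (fun i => τ (j+1) i i) (j+1)
          (fun i i' hi hii' => hτdiag (j+1) i i' hi hii')
        intro i hi hQ
        show φ (x (σ (j+1) (τ (j+1) i i))) < (a:ℝ)
        rw [← hdiagfac (j+1) i hi]
        exact hQ
      · right
        apply transfer hT (fun i => τ (j+1) i i) (j+1)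
          (fun i i' hi hii' => hτdiag (j+1) i i' hi hii')
        intro i hi hQ
        show (b:ℝ) < φ (x (σ (j+1) (τ (j+1) i i)))
        rw [← hdiagfac (j+1) i hi]
        exact hQ
    set L1 := Filter.liminf r Filter.atTop with hL1
    set L2 := Filter.limsup r Filter.atTop with hL2
    have hle : L1 ≤ L2 := Filter.liminf_le_limsup hBdd1 hBdd2
    have heq : L1 = L2 := by
      by_contra hne
      have hlt : L1 < L2 := lt_of_le_of_ne hle hne
      obtain ⟨a, ha1, ha2⟩ := exists_rat_btwn hlt
      obtain ⟨b, hb1, hb2⟩ := exists_rat_btwn ha2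
      rcases hosc a b hb1 with hfin | hfin
      · have hev : ∀ᶠ i in Filter.atTop, (a:ℝ) ≤ r i := by
          rw [← Nat.cofinite_eq_atTop, Filter.eventually_cofinite]
          apply hfin.subset
          intro i hi
          simpa [not_le] using hi
        have := Filter.le_liminf_of_le hBdd1.isCoboundedUnder_ge hev
        rw [← hL1] at this
        linarith
      · have hev : ∀ᶠ i in Filter.atTop, r i ≤ (b:ℝ) := by
          rw [← Nat.cofinite_eq_atTop, Filter.eventually_cofinite]
          apply hfin.subset
          intro i hi
          simpa [not_le] using hi
        have := Filter.limsup_le_of_le hBdd2.isCoboundedUnder_le hev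
        rw [← hL2] at this
        linarith
    refine ⟨L1, ?_⟩
    have := tendsto_of_liminf_eq_limsup (u := r) (f := Filter.atTop) (a := L1)
      hL1.symm (by rw [heq]) hBdd1 hBdd2
    exact this
end

section
/- Let Γ be any set. On the positive cone of ℓ1(Γ) (the set of f ∈ ℓ1(Γ) with f(γ) ≥ 0 for all γ), the norm topology and the weak topology σ(ℓ1(Γ), ℓ∞(Γ)) coincide. -/
open scoped ENNReal

section Aux
variable {Γ : Type*}

local notation "L1" => lp (fun _ : Γ => ℝ) 1

lemma stmt14_summable_norm (f : L1) : Summable fun γ => ‖f γ‖ := by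
  simpa using (lp.memℓp f).summable (by norm_num)

lemma stmt14_summable (f : L1) : Summable fun γ => f γ :=
  (stmt14_summable_norm f).of_norm

lemma stmt14_norm_eq (f : L1) : ‖f‖ = ∑' γ, ‖f γ‖ := by
  simpa using lp.norm_eq_tsum_rpow (by norm_num) f

lemma stmt14_exists_pair (b : Γ → ℝ) (C : ℝ) (hC : 0 ≤ C) (hb : ∀ γ, |b γ| ≤ C) :
    ∃ φ : L1 →L[ℝ] ℝ, ∀ f : L1, φ f = ∑' γ, b γ * f γ := by
  have hsum : ∀ f : L1, Summable fun γ => b γ * f γ := by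
    intro f
    refine Summable.of_norm (Summable.of_nonneg_of_le (fun γ => norm_nonneg _)
      (fun γ => ?_) ((stmt14_summable_norm f).mul_left C))
    rw [norm_mul]
    exact mul_le_mul_of_nonneg_right ((Real.norm_eq_abs _ ▸ hb γ)) (norm_nonneg _)
  refine ⟨LinearMap.mkContinuous
    { toFun := fun f => ∑' γ, b γ * f γ
      map_add' := fun f g => by
        simp_rw [lp.coeFn_add, Pi.add_apply, mul_add]
        exact Summable.tsum_add (hsum f) (hsum g)
      map_smul' := fun c f => by
        simp only [lp.coeFn_smul, Pi.smul_apply, smul_eq_mul, RingHom.id_apply]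
        rw [← tsum_mul_left]
        congr 1; ext γ; ring } C (fun f => ?_), fun f => rfl⟩
  simp only [LinearMap.coe_mk, AddHom.coe_mk]
  calc ‖∑' γ, b γ * f γ‖ ≤ ∑' γ, ‖b γ * f γ‖ := norm_tsum_le_tsum_norm ((hsum f).norm)
    _ ≤ ∑' γ, C * ‖f γ‖ := by
        refine Summable.tsum_le_tsum (fun γ => ?_) ((hsum f).norm) ((stmt14_summable_norm f).mul_left C)
        rw [norm_mul]
        exact mul_le_mul_of_nonneg_right ((Real.norm_eq_abs _ ▸ hb γ)) (norm_nonneg _)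
    _ = C * ‖f‖ := by rw [tsum_mul_left, stmt14_norm_eq]

lemma stmt14_key (f f₀ : L1) (hf : ∀ γ, 0 ≤ f γ) (hf₀ : ∀ γ, 0 ≤ f₀ γ)
    (F : Finset Γ) (ε : ℝ) (hε : 0 < ε)
    (htail : ∑' γ : {γ // γ ∉ F}, f₀ γ < ε / 8)
    (hsum : |(∑' γ, f γ) - ∑' γ, f₀ γ| < ε / 8)
    (hcoord : ∀ γ ∈ F, |f γ - f₀ γ| < ε / (8 * (F.card + 1))) :
    ‖f - f₀‖ < ε := by
  have hg : Summable fun γ => ‖f γ - f₀ γ‖ :=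
    ((stmt14_summable f).sub (stmt14_summable f₀)).norm
  have hnorm : ‖f - f₀‖ = ∑' γ, ‖f γ - f₀ γ‖ := by
    rw [stmt14_norm_eq]
    simp [lp.coeFn_sub]
  -- split
  have hsplit : ∑ γ ∈ F, ‖f γ - f₀ γ‖ + ∑' γ : ((F : Set Γ)ᶜ : Set Γ), ‖f ↑γ - f₀ ↑γ‖
      = ∑' γ, ‖f γ - f₀ γ‖ := Summable.sum_add_tsum_compl hg
  have hsplitf : ∑ γ ∈ F, f γ + ∑' γ : ((F : Set Γ)ᶜ : Set Γ), f ↑γ = ∑' γ, f γ :=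
    Summable.sum_add_tsum_compl (stmt14_summable f)
  have hsplitf₀ : ∑ γ ∈ F, f₀ γ + ∑' γ : ((F : Set Γ)ᶜ : Set Γ), f₀ ↑γ = ∑' γ, f₀ γ :=
    Summable.sum_add_tsum_compl (stmt14_summable f₀)
  have hF : ∑ γ ∈ F, ‖f γ - f₀ γ‖ ≤ ε / 8 := by
    calc ∑ γ ∈ F, ‖f γ - f₀ γ‖ ≤ ∑ γ ∈ F, ε / (8 * (F.card + 1)) :=
          Finset.sum_le_sum fun γ hγ => le_of_lt (by rw [Real.norm_eq_abs]; exact hcoord γ hγ)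
      _ = F.card * (ε / (8 * (F.card + 1))) := by
          rw [Finset.sum_const, nsmul_eq_mul]
      _ ≤ ε / 8 := by
          rw [mul_comm, div_mul_eq_mul_div, div_le_div_iff₀ (by positivity) (by norm_num)]
          nlinarith [Nat.cast_nonneg (α := ℝ) F.card, hε.le]
  have htail_eq : ∑' γ : ((F : Set Γ)ᶜ : Set Γ), f₀ ↑γ = ∑' γ : {γ // γ ∉ F}, f₀ γ := by
    apply tsum_congr_set_coe
    ext γ; exact Iff.rfl
  have hcomplle : ∑' γ : ((F : Set Γ)ᶜ : Set Γ), ‖f ↑γ - f₀ ↑γ‖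
      ≤ (∑' γ : ((F : Set Γ)ᶜ : Set Γ), f ↑γ) + ∑' γ : ((F : Set Γ)ᶜ : Set Γ), f₀ ↑γ := by
    have hsf : Summable fun γ : ((F : Set Γ)ᶜ : Set Γ) => f ↑γ := (stmt14_summable f).subtype _
    have hsf₀ : Summable fun γ : ((F : Set Γ)ᶜ : Set Γ) => f₀ ↑γ := (stmt14_summable f₀).subtype _
    rw [← Summable.tsum_add hsf hsf₀]
    refine Summable.tsum_le_tsum (fun γ => ?_) (hg.subtype _) (hsf.add hsf₀)
    rw [Real.norm_eq_abs]
    have := abs_sub (f ↑γ) (f₀ ↑γ)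
    rw [abs_of_nonneg (hf _), abs_of_nonneg (hf₀ _)] at this
    exact this
  -- bound ∑_F f₀ - ∑_F f
  have hFdiff : ∑ γ ∈ F, f₀ γ - ∑ γ ∈ F, f γ ≤ ε / 8 := by
    rw [← Finset.sum_sub_distrib]
    calc ∑ γ ∈ F, (f₀ γ - f γ) ≤ ∑ γ ∈ F, ‖f γ - f₀ γ‖ := by
          refine Finset.sum_le_sum fun γ hγ => ?_
          rw [Real.norm_eq_abs, abs_sub_comm]
          exact le_abs_self _
      _ ≤ ε / 8 := hF
  have habs : (∑' γ, f γ) - ∑' γ, f₀ γ ≤ ε / 8 := le_of_lt (lt_of_le_of_lt (le_abs_self _) hsum)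
  linarith [hnorm, hsplit, hsplitf, hsplitf₀, hF, hcomplle, htail_eq ▸ htail]
end Aux

def stmt14X (Γ : Type*) : Type _ := {f : lp (fun _ : Γ => ℝ) 1 // ∀ γ : Γ, 0 ≤ f γ}

noncomputable instance stmt14X.topologicalSpace (Γ : Type*) : TopologicalSpace (stmt14X Γ) :=
  TopologicalSpace.induced
    (fun f : {f : lp (fun _ : Γ => ℝ) 1 // ∀ γ : Γ, 0 ≤ f γ} =>
      (show WeakSpace ℝ (lp (fun _ : Γ => ℝ) 1) from (f : lp (fun _ : Γ => ℝ) 1)))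
    inferInstance

lemma stmt14_hard (Γ : Type*) :
    Continuous (fun f : stmt14X Γ =>
      (Subtype.val (f : {f : lp (fun _ : Γ => ℝ) 1 // ∀ γ : Γ, 0 ≤ f γ})
        : lp (fun _ : Γ => ℝ) 1)) := by
  classical
  have hwm : Continuous (fun f : stmt14X Γ =>
      (show WeakSpace ℝ (lp (fun _ : Γ => ℝ) 1) from
        (Subtype.val (f : {f : lp (fun _ : Γ => ℝ) 1 // ∀ γ : Γ, 0 ≤ f γ})))) :=
    continuous_induced_dom
  have keyφ : ∀ φ : lp (fun _ : Γ => ℝ) 1 →L[ℝ] ℝ, ∀ f₀ : stmt14X Γ,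
      Filter.Tendsto (fun f : stmt14X Γ => φ (Subtype.val f)) (nhds f₀)
        (nhds (φ (Subtype.val f₀))) := by
    intro φ f₀
    have h1 : Continuous fun x : WeakSpace ℝ (lp (fun _ : Γ => ℝ) 1) => φ x :=
      WeakBilin.eval_continuous ((topDualPairing ℝ (lp (fun _ : Γ => ℝ) 1)).flip) φ
    exact ((h1.comp hwm).tendsto f₀)
  obtain ⟨φs, hφs⟩ := stmt14_exists_pair (fun _ : Γ => (1 : ℝ)) 1 one_pos.le
    (fun γ => by norm_num)
  have hevs : ∀ γ : Γ, ∃ φ : lp (fun _ : Γ => ℝ) 1 →L[ℝ] ℝ,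
      ∀ f : lp (fun _ : Γ => ℝ) 1, φ f = f γ := by
    intro γ
    obtain ⟨φ, hφ⟩ := stmt14_exists_pair (Pi.single γ 1) 1 one_pos.le (fun γ' => by
      rcases eq_or_ne γ' γ with rfl | h
      · simp
      · simp [Pi.single_apply, h])
    refine ⟨φ, fun f => ?_⟩
    rw [hφ]
    rw [tsum_eq_single γ (fun γ' h => by simp [Pi.single_apply, h])]
    simp
  choose φev hφev using hevs
  rw [continuous_iff_continuousAt]
  intro f₀
  rw [ContinuousAt, Metric.tendsto_nhds]
  intro ε hε
  have htails := tendsto_tsum_compl_atTop_zero (fun γ => ((Subtype.val f₀ : lp (fun _ : Γ => ℝ) 1) γ))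
  obtain ⟨F, hF⟩ := (htails.eventually_lt_const (by positivity : (0:ℝ) < ε / 8)).exists
  have hsumev : ∀ᶠ f : stmt14X Γ in nhds f₀,
      |(∑' γ, (Subtype.val f : lp (fun _ : Γ => ℝ) 1) γ)
        - ∑' γ, (Subtype.val f₀ : lp (fun _ : Γ => ℝ) 1) γ| < ε / 8 := by
    have h2 := Metric.tendsto_nhds.mp (keyφ φs f₀) (ε / 8) (by positivity)
    filter_upwards [h2] with f hf
    rw [Real.dist_eq, hφs, hφs] at hf
    simpa using hf
  have hcoordev : ∀ᶠ f : stmt14X Γ in nhds f₀,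
      ∀ γ ∈ F, |(Subtype.val f : lp (fun _ : Γ => ℝ) 1) γ
        - (Subtype.val f₀ : lp (fun _ : Γ => ℝ) 1) γ| < ε / (8 * (F.card + 1)) := by
    rw [Filter.eventually_all_finset]
    intro γ hγ
    have h2 := Metric.tendsto_nhds.mp (keyφ (φev γ) f₀) (ε / (8 * (F.card + 1)))
      (by positivity)
    filter_upwards [h2] with f hf
    rw [Real.dist_eq, hφev, hφev] at hf
    exact hf
  filter_upwards [hsumev, hcoordev] with f hf1 hf2
  rw [dist_eq_norm]
  exact stmt14_key (Subtype.val f) (Subtype.val f₀) (Subtype.property f) (Subtype.property f₀) F ε hε hF hf1 hf2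

theorem stmt14 (Γ : Type*) :
    TopologicalSpace.induced
        ((↑) : {f : lp (fun _ : Γ => ℝ) 1 // ∀ γ : Γ, 0 ≤ f γ} → lp (fun _ : Γ => ℝ) 1)
        inferInstance
      = TopologicalSpace.induced
        (fun f : {f : lp (fun _ : Γ => ℝ) 1 // ∀ γ : Γ, 0 ≤ f γ} =>
          (show WeakSpace ℝ (lp (fun _ : Γ => ℝ) 1) from (f : lp (fun _ : Γ => ℝ) 1)))
        inferInstance := by
  have hA : TopologicalSpace.induced
      ((↑) : {f : lp (fun _ : Γ => ℝ) 1 // ∀ γ : Γ, 0 ≤ f γ} → lp (fun _ : Γ => ℝ) 1)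
      inferInstance ≤ TopologicalSpace.induced
      (fun f : {f : lp (fun _ : Γ => ℝ) 1 // ∀ γ : Γ, 0 ≤ f γ} =>
        (show WeakSpace ℝ (lp (fun _ : Γ => ℝ) 1) from (f : lp (fun _ : Γ => ℝ) 1)))
      inferInstance := by
    refine continuous_iff_le_induced.mp ?_
    refine WeakBilin.continuous_of_continuous_eval _ fun y => ?_
    exact y.continuous.comp continuous_induced_dom
  have hB : TopologicalSpace.induced
      (fun f : {f : lp (fun _ : Γ => ℝ) 1 // ∀ γ : Γ, 0 ≤ f γ} =>
        (show WeakSpace ℝ (lp (fun _ : Γ => ℝ) 1) from (f : lp (fun _ : Γ => ℝ) 1)))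
      inferInstance ≤ TopologicalSpace.induced
      ((↑) : {f : lp (fun _ : Γ => ℝ) 1 // ∀ γ : Γ, 0 ≤ f γ} → lp (fun _ : Γ => ℝ) 1)
      inferInstance := by
    refine continuous_iff_le_induced.mp ?_
    exact stmt14_hard Γ
  exact le_antisymm hA hB
end
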